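/- In the graph G_{q,k} (q ≥ 1, k ≥ 1), the bridge edge {t, r_1} satisfies EMD_{dist}(P_t, P_{r_1}) ≥ 5/4 + (3/2)·(q+1)/(q+3), and consequently its Ollivier–Ricci curvature satisfies C_{G_{q,k}}({t,r_1}) ≤ −1/4 − (3/2)·(q+1)/(q+3). (This is the bound Λ₅ ≤ −1/4 − (3/2)·(√n+1)/(√n+3) of claim (v) in the proof of the paper's Theorem 1, with q playing the role of √n.) -/

import Mathlib

/-- Earth Mover's Distance between two distributions `μ ν : V → ℝ` w.r.t. a
cost function `d : V → V → ℝ`: the minimum (infimum) of the total transport cost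
over all feasible transport plans. -/
noncomputable def EMD {V : Type} (d : V → V → ℝ) (μ ν : V → ℝ) : ℝ :=
  sInf { c : ℝ | ∃ z : V → V → ℝ,
    (∀ u v, 0 ≤ z u v) ∧ (∀ u, ∑ᶠ v, z u v = μ u) ∧ (∀ v, ∑ᶠ u, z u v = ν v) ∧
    c = ∑ᶠ u, ∑ᶠ v, d u v * z u v }

/-- The degree of a vertex: the number of its neighbours. -/
noncomputable def degC {V : Type} (G : SimpleGraph V) (u : V) : ℕ :=
  Nat.card {x | G.Adj u x}

open Classical in
/-- The uniform probability distribution on the closed neighbourhood of `u`. -/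
noncomputable def Pdist {V : Type} (G : SimpleGraph V) (u : V) : V → ℝ :=
  fun w => if w = u ∨ G.Adj u w then ((degC G u : ℝ) + 1)⁻¹ else 0

/-- The graph distance, as a real-valued cost function. -/
noncomputable def gdist {V : Type} (G : SimpleGraph V) : V → V → ℝ :=
  fun a b => (G.dist a b : ℝ)

/-- The total variation distance between the closed-neighbourhood distributions of `u`, `v`. -/
noncomputable def tvd {V : Type} (G : SimpleGraph V) (u v : V) : ℝ :=
  (1 / 2) * ∑ᶠ w, |Pdist G u w - Pdist G v w|

/-- The Ollivier–Ricci curvature of the (ordered) pair `u v`. -/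
noncomputable def ricci {V : Type} (G : SimpleGraph V) (u v : V) : ℝ :=
  1 - EMD (gdist G) (Pdist G u) (Pdist G v)


/-- Vertices of the complete 10-ary tree of depth `k`: lists over `Fin 10` of length
at most `k`, recording the (reversed) path from the root `[]`. -/
def TreeVert (k : ℕ) : Type := { l : List (Fin 10) // l.length ≤ k }

instance (k : ℕ) : DecidableEq (TreeVert k) :=
  inferInstanceAs (DecidableEq { l : List (Fin 10) // l.length ≤ k })

instance (k : ℕ) : Fintype (TreeVert k) :=
  Fintype.ofSurjective
    (fun x : Σ j : Fin (k + 1), List.Vector (Fin 10) j =>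
      (⟨x.2.1, by have h1 := x.2.2; have h2 := x.1.isLt; omega⟩ : TreeVert k))
    (fun y => ⟨⟨⟨y.1.length, Nat.lt_succ_of_le y.2⟩, ⟨y.1, rfl⟩⟩, Subtype.ext rfl⟩)

/-- The root of the tree. -/
def treeRoot (k : ℕ) : TreeVert k := ⟨[], by simp⟩

/-- The parent of a tree vertex (the root is mapped to itself). -/
def treeParent {k : ℕ} (x : TreeVert k) : TreeVert k :=
  ⟨x.1.tail, by have h1 := x.2; have h2 := List.length_tail (l := x.1); omega⟩

/-- The vertex set of the graph `G_{q,k}`: the two special vertices `s`, `t`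
(encoded as `Fin 2`), the vertices `p_1, …, p_q`, and the tree vertices. -/
abbrev GVert (q k : ℕ) : Type := (Fin 2 ⊕ Fin q) ⊕ TreeVert k

def vS (q k : ℕ) : GVert q k := Sum.inl (Sum.inl 0)
def vT (q k : ℕ) : GVert q k := Sum.inl (Sum.inl 1)
def vP (q k : ℕ) (i : Fin q) : GVert q k := Sum.inl (Sum.inr i)
def vTr (q k : ℕ) (x : TreeVert k) : GVert q k := Sum.inr x

/-- Base adjacency relation generating the edges of `G_{q,k}`: the edge `{s,t}`,
the edges `{p_i, s}` and `{p_i, t}`, the bridge `{t, r_1}` to the root of the tree,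
and the parent-child tree edges. -/
def gadjBase (q k : ℕ) : GVert q k → GVert q k → Prop := fun x y =>
  (x = vS q k ∧ y = vT q k) ∨
  (∃ i : Fin q, x = vP q k i ∧ (y = vS q k ∨ y = vT q k)) ∨
  (x = vT q k ∧ y = vTr q k (treeRoot k)) ∨
  (∃ u v : TreeVert k, x = vTr q k u ∧ y = vTr q k v ∧ ∃ a : Fin 10, u.1 = a :: v.1)

/-- The graph `G_{q,k}` from the proof of the paper's Theorem 1
(with `q` playing the role of `√n`). -/
def Gqk (q k : ℕ) : SimpleGraph (GVert q k) := SimpleGraph.fromRel (gadjBase q k)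

/-- `N_k = (10^(k+1) - 1)/9`, the number of vertices of the complete 10-ary tree of depth `k`. -/
def Nk (k : ℕ) : ℕ := (10 ^ (k + 1) - 1) / 9


open Finset in
lemma lip_dist' {V : Type} {G : SimpleGraph V} {f : V → ℝ}
    (hf : ∀ u v, G.Adj u v → f u - f v ≤ 1) {u v : V} (h : G.Reachable u v) :
    f u - f v ≤ G.dist u v := by
  obtain ⟨p, hp⟩ := h.exists_walk_length_eq_dist
  rw [← hp]
  clear hp
  have key : ∀ {a b : V} (p : G.Walk a b), f a - f b ≤ p.length := by
    intro a b p
    induction p with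
    | nil => simp
    | cons h' p ih =>
      have := hf _ _ h'
      simp only [SimpleGraph.Walk.length_cons]
      push_cast
      linarith
  exact key p

lemma pdist_nonneg {V : Type} (G : SimpleGraph V) (u w : V) : 0 ≤ Pdist G u w := by
  classical
  by_cases h : w = u ∨ G.Adj u w <;> simp [Pdist, h] <;> positivity

lemma degC_eq_filter {V : Type} [Fintype V] [DecidableEq V] (G : SimpleGraph V)
    [DecidableRel G.Adj] (u : V) :
    degC G u = (Finset.univ.filter (G.Adj u)).card := by
  rw [degC, Nat.card_eq_fintype_card, ← Set.toFinset_card, Set.toFinset_setOf]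

lemma pdist_mass {V : Type} [Fintype V] (G : SimpleGraph V) (u : V) :
    ∑ᶠ w, Pdist G u w = 1 := by
  classical
  rw [finsum_eq_sum_of_fintype]
  have : ∀ w, Pdist G u w = if w = u ∨ G.Adj u w then ((degC G u : ℝ) + 1)⁻¹ else 0 := by
    intro w; simp [Pdist]
  rw [Finset.sum_congr rfl (fun w _ => this w), ← Finset.sum_filter]
  rw [Finset.sum_const]
  have hfil : Finset.univ.filter (fun w => w = u ∨ G.Adj u w)
      = insert u (Finset.univ.filter (G.Adj u)) := by
    ext w; simp [or_comm, eq_comm]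
  rw [hfil, Finset.card_insert_of_notMem (by simp), ← degC_eq_filter]
  have h1 : ((degC G u : ℝ) + 1) ≠ 0 := by positivity
  rw [nsmul_eq_mul]
  push_cast
  field_simp

lemma emd_dual {V : Type} [Fintype V] (d : V → V → ℝ) (μ ν : V → ℝ) (f : V → ℝ)
    (hd : ∀ u v, f u - f v ≤ d u v) (hμ : ∀ u, 0 ≤ μ u) (hν : ∀ v, 0 ≤ ν v)
    (hμ1 : ∑ᶠ u, μ u = 1) (hν1 : ∑ᶠ v, ν v = 1) :
    (∑ u, f u * μ u) - (∑ v, f v * ν v) ≤ EMD d μ ν := by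
  apply le_csInf
  · refine ⟨∑ᶠ u, ∑ᶠ v, d u v * (μ u * ν v), fun u v => μ u * ν v, ?_, ?_, ?_, rfl⟩
    · exact fun u v => mul_nonneg (hμ u) (hν v)
    · intro u
      rw [finsum_eq_sum_of_fintype, ← Finset.mul_sum, ← finsum_eq_sum_of_fintype, hν1, mul_one]
    · intro v
      rw [finsum_eq_sum_of_fintype]
      rw [show ∑ u, μ u * ν v = (∑ u, μ u) * ν v by rw [Finset.sum_mul]]
      rw [← finsum_eq_sum_of_fintype, hμ1, one_mul]
  · rintro c ⟨z, hz0, hzμ, hzν, rfl⟩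
    have hμ' : ∀ u, ∑ v, z u v = μ u := fun u => by
      rw [← finsum_eq_sum_of_fintype]; exact hzμ u
    have hν' : ∀ v, ∑ u, z u v = ν v := fun v => by
      rw [← finsum_eq_sum_of_fintype]; exact hzν v
    rw [finsum_eq_sum_of_fintype]
    have hrw : ∀ u, ∑ᶠ v, d u v * z u v = ∑ v, d u v * z u v :=
      fun u => finsum_eq_sum_of_fintype _
    rw [Finset.sum_congr rfl (fun u _ => hrw u)]
    have key : ∑ u, ∑ v, (f u - f v) * z u v ≤ ∑ u, ∑ v, d u v * z u v := by
      apply Finset.sum_le_sum; intro u _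
      apply Finset.sum_le_sum; intro v _
      exact mul_le_mul_of_nonneg_right (hd u v) (hz0 u v)
    refine le_trans (le_of_eq ?_) key
    have : ∀ u v : V, (f u - f v) * z u v = f u * z u v - f v * z u v := by
      intros; ring
    simp_rw [this, Finset.sum_sub_distrib]
    rw [Finset.sum_comm (f := fun u v => f v * z u v)]
    simp_rw [← Finset.mul_sum]
    congr 1
    · exact Finset.sum_congr rfl fun u _ => by rw [hμ' u]
    · exact Finset.sum_congr rfl fun v _ => by rw [hν' v]
section Graph
variable (q k : ℕ)

noncomputable def fdual : GVert q k → ℝ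
  | Sum.inl (Sum.inl i) => if i = 0 then 3 else 2
  | Sum.inl (Sum.inr _) => 3
  | Sum.inr x => if x.1 = [] then 1 else 0

lemma adj_iff (x y : GVert q k) :
    (Gqk q k).Adj x y ↔ x ≠ y ∧ (gadjBase q k x y ∨ gadjBase q k y x) :=
  SimpleGraph.fromRel_adj _ _ _

lemma fdual_s : fdual q k (vS q k) = 3 := by simp [fdual, vS]
lemma fdual_t : fdual q k (vT q k) = 2 := by simp [fdual, vT]
lemma fdual_p (i : Fin q) : fdual q k (vP q k i) = 3 := rfl
lemma fdual_root : fdual q k (vTr q k (treeRoot k)) = 1 := by simp [fdual, vTr, treeRoot]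
lemma fdual_tree (x : TreeVert k) : fdual q k (vTr q k x) = if x.1 = [] then 1 else 0 := rfl

lemma lip_fdual : ∀ u v : GVert q k, (Gqk q k).Adj u v → fdual q k u - fdual q k v ≤ 1 := by
  have base : ∀ u v : GVert q k, gadjBase q k u v →
      fdual q k u - fdual q k v ≤ 1 ∧ fdual q k v - fdual q k u ≤ 1 := by
    intro u v h
    rcases h with ⟨h1, h2⟩ | ⟨i, h1, h2 | h2⟩ | ⟨h1, h2⟩ | ⟨a, b, h1, h2, c, hc⟩ <;>
      subst h1 <;> subst h2
    · norm_num [fdual_s, fdual_t]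
    · norm_num [fdual_s, fdual_p]
    · norm_num [fdual_t, fdual_p]
    · norm_num [fdual_t, fdual_root]
    · rw [fdual_tree, fdual_tree, hc]
      simp only [List.cons_ne_nil, if_false]
      split <;> norm_num
  intro u v h
  rw [adj_iff] at h
  rcases h.2 with h' | h'
  · exact (base u v h').1
  · exact (base v u h').2
end Graph
section Graph2
variable (q k : ℕ)

def childT (hk : 1 ≤ k) (a : Fin 10) : TreeVert k := ⟨[a], by simpa using hk⟩

lemma adj_t_iff (x : GVert q k) :
    (Gqk q k).Adj (vT q k) x ↔
      x = vS q k ∨ (∃ i, x = vP q k i) ∨ x = vTr q k (treeRoot k) := by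
  rw [adj_iff]
  constructor
  · rintro ⟨hne, h | h⟩ <;>
      rcases h with ⟨h1, h2⟩ | ⟨i, h1, h2⟩ | ⟨h1, h2⟩ | ⟨a, b, h1, h2, c, hc⟩
    · simp [vT, vS] at h1
    · simp [vT, vP] at h1
    · exact Or.inr (Or.inr h2)
    · simp [vT, vTr] at h1
    · exact Or.inl h1
    · exact Or.inr (Or.inl ⟨i, h1⟩)
    · rcases h2 with h2; simp [vT, vTr] at h2
    · simp [vT, vTr] at h2
  · intro h
    rcases h with h | ⟨i, h⟩ | h <;> subst h
    · exact ⟨by simp [vT, vS], Or.inr (Or.inl ⟨rfl, rfl⟩)⟩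
    · exact ⟨by simp [vT, vP], Or.inr (Or.inr (Or.inl ⟨i, rfl, Or.inr rfl⟩))⟩
    · exact ⟨by simp [vT, vTr], Or.inl (Or.inr (Or.inr (Or.inl ⟨rfl, rfl⟩)))⟩

lemma adj_root_iff (hk : 1 ≤ k) (x : GVert q k) :
    (Gqk q k).Adj (vTr q k (treeRoot k)) x ↔
      x = vT q k ∨ ∃ a : Fin 10, x = vTr q k (childT k hk a) := by
  rw [adj_iff]
  constructor
  · rintro ⟨hne, h | h⟩ <;>
      rcases h with ⟨h1, h2⟩ | ⟨i, h1, h2⟩ | ⟨h1, h2⟩ | ⟨a, b, h1, h2, c, hc⟩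
    · simp [vTr, vS] at h1
    · simp [vTr, vP] at h1
    · simp [vTr, vT] at h1
    · -- root = vTr a, x = vTr b, a.1 = c :: b.1 : contradiction since a = root
      have ha : a = treeRoot k := by
        have := h1; simp only [vTr, Sum.inr.injEq] at this; exact this.symm
      rw [ha] at hc
      simp [treeRoot] at hc
    · simp [vT, vTr] at h2
    · rcases h2 with h2 | h2 <;> simp [vS, vT, vTr] at h2
    · exact Or.inl h1
    · -- x = vTr a, root = vTr b, a.1 = c :: b.1 ⇒ a.1 = [c]
      have hb : b = treeRoot k := by
        have := h2; simp only [vTr, Sum.inr.injEq] at this; exact this.symm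
      rw [hb] at hc
      simp only [treeRoot] at hc
      refine Or.inr ⟨c, ?_⟩
      rw [h1]
      congr 1
      exact Subtype.ext hc
  · intro h
    rcases h with h | ⟨a, h⟩ <;> subst h
    · refine ⟨by simp [vT, vTr], Or.inr (Or.inr (Or.inr (Or.inl ⟨rfl, rfl⟩)))⟩
    · refine ⟨?_, Or.inr (Or.inr (Or.inr (Or.inr ⟨childT k hk a, treeRoot k, rfl, rfl, a, rfl⟩)))⟩
      have hne : treeRoot k ≠ childT k hk a := by
        intro h; exact absurd (congrArg Subtype.val h) (by simp [treeRoot, childT])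
      simp [vTr, hne]
end Graph2
section Graph3
variable (q k : ℕ)

lemma reach_t (x : GVert q k) : (Gqk q k).Reachable (vT q k) x := by
  have hroot : (Gqk q k).Adj (vT q k) (vTr q k (treeRoot k)) :=
    (adj_t_iff q k _).2 (Or.inr (Or.inr rfl))
  have htree : ∀ (l : List (Fin 10)) (h : l.length ≤ k),
      (Gqk q k).Reachable (vT q k) (vTr q k ⟨l, h⟩) := by
    intro l
    induction l with
    | nil => intro h; exact hroot.reachable -- vTr ⟨[], h⟩ = root by proof irrel
    | cons a l ih =>
      intro h
      have h' : l.length ≤ k := by simp at h; omega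
      have hadj : (Gqk q k).Adj (vTr q k ⟨l, h'⟩) (vTr q k ⟨a :: l, h⟩) := by
        rw [adj_iff]
        refine ⟨?_, Or.inr (Or.inr (Or.inr (Or.inr ⟨⟨a :: l, h⟩, ⟨l, h'⟩, rfl, rfl, a, rfl⟩)))⟩
        intro hcon
        have : l = a :: l := congrArg Subtype.val (Sum.inr.inj hcon : (⟨l, h'⟩ : TreeVert k) = ⟨a :: l, h⟩)
        simp at this
      exact (ih h').trans hadj.reachable
  rcases x with (i | i) | x
  · -- Fin 2 : s or t
    fin_cases i
    · exact ((adj_t_iff q k _).2 (Or.inl rfl)).reachable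
    · exact SimpleGraph.Reachable.refl _
  · exact ((adj_t_iff q k _).2 (Or.inr (Or.inl ⟨i, rfl⟩))).reachable
  · exact htree x.1 x.2
end Graph3
section Graph4
variable (q k : ℕ)
open Finset

lemma vP_inj : Function.Injective (vP q k) := by
  intro a b h; simpa [vP] using h

lemma degT : degC (Gqk q k) (vT q k) = q + 2 := by
  classical
  rw [degC_eq_filter]
  have : Finset.univ.filter ((Gqk q k).Adj (vT q k))
      = insert (vS q k) (insert (vTr q k (treeRoot k)) (Finset.image (vP q k) Finset.univ)) := by
    ext x
    simp only [Finset.mem_filter, Finset.mem_univ, true_and, Finset.mem_insert,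
      Finset.mem_image, adj_t_iff, eq_comm]
    tauto
  rw [this]
  rw [Finset.card_insert_of_notMem (by simp [vS, vTr, vP]),
    Finset.card_insert_of_notMem (by simp [vTr, vP]),
    Finset.card_image_of_injective _ (vP_inj q k)]
  simp [Finset.card_univ]

lemma childT_inj (hk : 1 ≤ k) : Function.Injective (fun a => vTr q k (childT k hk a)) := by
  intro a b h
  have := congrArg Subtype.val (by simpa [vTr] using h : childT k hk a = childT k hk b)
  simpa [childT] using this

lemma degR (hk : 1 ≤ k) : degC (Gqk q k) (vTr q k (treeRoot k)) = 11 := by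
  classical
  rw [degC_eq_filter]
  have : Finset.univ.filter ((Gqk q k).Adj (vTr q k (treeRoot k)))
      = insert (vT q k) (Finset.image (fun a => vTr q k (childT k hk a)) Finset.univ) := by
    ext x
    simp only [Finset.mem_filter, Finset.mem_univ, true_and, Finset.mem_insert,
      Finset.mem_image, adj_root_iff q k hk, eq_comm]
  rw [this]
  rw [Finset.card_insert_of_notMem (by simp [vT, vTr]),
    Finset.card_image_of_injective _ (childT_inj q k hk)]
  simp

end Graph4
/-- In the graph `G_{q,k}` (`q ≥ 1`, `k ≥ 1`), the bridge edge
`{t, r_1}` satisfies `EMD(P_t, P_{r_1}) ≥ 5/4 + (3/2)·(q+1)/(q+3)`, and consequently its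
Ollivier–Ricci curvature satisfies `C_{G_{q,k}}({t,r_1}) ≤ −1/4 − (3/2)·(q+1)/(q+3)`. -/
theorem bridge_edge_curvature (q k : ℕ) (hq : 1 ≤ q) (hk : 1 ≤ k) :
    5 / 4 + (3 / 2) * (((q : ℝ) + 1) / ((q : ℝ) + 3))
      ≤ EMD (gdist (Gqk q k)) (Pdist (Gqk q k) (vT q k))
          (Pdist (Gqk q k) (vTr q k (treeRoot k))) ∧
    ricci (Gqk q k) (vT q k) (vTr q k (treeRoot k))
      ≤ -(1 / 4) - (3 / 2) * (((q : ℝ) + 1) / ((q : ℝ) + 3)) := by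
  classical
  set G := Gqk q k with hG
  have hq3 : (0:ℝ) < (q:ℝ) + 3 := by positivity
  have hct : ((degC G (vT q k) : ℝ) + 1) = (q:ℝ) + 3 := by
    rw [hG, degT]; push_cast; ring
  have hcr : ((degC G (vTr q k (treeRoot k)) : ℝ) + 1) = (12:ℝ) := by
    rw [hG, degR q k hk]; norm_num
  have pvt : ∀ w, Pdist G (vT q k) w
      = if w = vT q k ∨ G.Adj (vT q k) w then ((q:ℝ)+3)⁻¹ else 0 := by
    intro w; simp only [Pdist, hct]
  have pvr : ∀ w, Pdist G (vTr q k (treeRoot k)) w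
      = if w = vTr q k (treeRoot k) ∨ G.Adj (vTr q k (treeRoot k)) w then (12:ℝ)⁻¹ else 0 := by
    intro w; simp only [Pdist, hcr]
  -- individual values
  have pts : Pdist G (vT q k) (vS q k) = ((q:ℝ)+3)⁻¹ := by
    rw [pvt, if_pos (Or.inr ((adj_t_iff q k _).2 (Or.inl rfl)))]
  have ptt : Pdist G (vT q k) (vT q k) = ((q:ℝ)+3)⁻¹ := by
    rw [pvt, if_pos (Or.inl rfl)]
  have ptp : ∀ i : Fin q, Pdist G (vT q k) (vP q k i) = ((q:ℝ)+3)⁻¹ := by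
    intro i
    rw [pvt, if_pos (Or.inr ((adj_t_iff q k _).2 (Or.inr (Or.inl ⟨i, rfl⟩))))]
  have ptr : Pdist G (vT q k) (vTr q k (treeRoot k)) = ((q:ℝ)+3)⁻¹ := by
    rw [pvt, if_pos (Or.inr ((adj_t_iff q k _).2 (Or.inr (Or.inr rfl))))]
  have prs : Pdist G (vTr q k (treeRoot k)) (vS q k) = 0 := by
    rw [pvr, if_neg]
    rintro (h | h)
    · simp [vS, vTr] at h
    · rcases (adj_root_iff q k hk _).1 h with h' | ⟨a, h'⟩
      · simp [vS, vT] at h'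
      · simp [vS, vTr] at h'
  have prt : Pdist G (vTr q k (treeRoot k)) (vT q k) = (12:ℝ)⁻¹ := by
    rw [pvr, if_pos (Or.inr ((adj_root_iff q k hk _).2 (Or.inl rfl)))]
  have prp : ∀ i : Fin q, Pdist G (vTr q k (treeRoot k)) (vP q k i) = 0 := by
    intro i
    rw [pvr, if_neg]
    rintro (h | h)
    · simp [vP, vTr] at h
    · rcases (adj_root_iff q k hk _).1 h with h' | ⟨a, h'⟩
      · simp [vP, vT] at h'
      · simp [vP, vTr] at h'
  have prr : Pdist G (vTr q k (treeRoot k)) (vTr q k (treeRoot k)) = (12:ℝ)⁻¹ := by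
    rw [pvr, if_pos (Or.inl rfl)]
  -- splitting sums
  have split : ∀ g : GVert q k → ℝ, ∑ u, g u
      = (∑ i : Fin 2, g (Sum.inl (Sum.inl i)) + ∑ i : Fin q, g (Sum.inl (Sum.inr i)))
        + ∑ x : TreeVert k, g (Sum.inr x) := by
    intro g; rw [Fintype.sum_sum_type, Fintype.sum_sum_type]
  have e0 : (Sum.inl (Sum.inl 0) : GVert q k) = vS q k := rfl
  have e1 : (Sum.inl (Sum.inl 1) : GVert q k) = vT q k := rfl
  have e2 : ∀ i : Fin q, (Sum.inl (Sum.inr i) : GVert q k) = vP q k i := fun _ => rfl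
  have e3 : ∀ x : TreeVert k, (Sum.inr x : GVert q k) = vTr q k x := fun _ => rfl
  have ftree0 : ∀ x : TreeVert k, x ≠ treeRoot k → fdual q k (vTr q k x) = 0 := by
    intro x hx
    rw [fdual_tree, if_neg]
    intro hnil
    exact hx (Subtype.ext hnil)
  -- sum for t
  have hSt : ∑ u, fdual q k u * Pdist G (vT q k) u = (3*(q:ℝ)+6) * ((q:ℝ)+3)⁻¹ := by
    rw [split]
    rw [Fin.sum_univ_two, e0, e1]
    rw [fdual_s, fdual_t, pts, ptt]
    have hq' : ∑ i : Fin q, fdual q k (Sum.inl (Sum.inr i)) * Pdist G (vT q k) (Sum.inl (Sum.inr i))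
        = (q:ℝ) * (3 * ((q:ℝ)+3)⁻¹) := by
      rw [Finset.sum_congr rfl (fun i _ => by rw [e2 i, fdual_p, ptp i])]
      rw [Finset.sum_const, Finset.card_univ, Fintype.card_fin, nsmul_eq_mul]
    have htree : ∑ x : TreeVert k, fdual q k (Sum.inr x) * Pdist G (vT q k) (Sum.inr x)
        = 1 * ((q:ℝ)+3)⁻¹ := by
      rw [Finset.sum_congr rfl (fun x _ => by rw [e3 x])]
      rw [Finset.sum_eq_single (treeRoot k)
        (fun b _ hb => by rw [ftree0 b hb, zero_mul])
        (fun h => absurd (Finset.mem_univ _) h)]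
      rw [fdual_root, ptr]
    rw [hq', htree]
    ring
  -- sum for root
  have hSr : ∑ u, fdual q k u * Pdist G (vTr q k (treeRoot k)) u = 3 * (12:ℝ)⁻¹ := by
    rw [split]
    rw [Fin.sum_univ_two, e0, e1]
    rw [fdual_s, fdual_t, prs, prt]
    have hq' : ∑ i : Fin q, fdual q k (Sum.inl (Sum.inr i))
        * Pdist G (vTr q k (treeRoot k)) (Sum.inl (Sum.inr i)) = 0 := by
      rw [Finset.sum_congr rfl (fun i _ => by rw [e2 i, prp i, mul_zero])]
      simp
    have htree : ∑ x : TreeVert k, fdual q k (Sum.inr x)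
        * Pdist G (vTr q k (treeRoot k)) (Sum.inr x) = 1 * (12:ℝ)⁻¹ := by
      rw [Finset.sum_congr rfl (fun x _ => by rw [e3 x])]
      rw [Finset.sum_eq_single (treeRoot k)
        (fun b _ hb => by rw [ftree0 b hb, zero_mul])
        (fun h => absurd (Finset.mem_univ _) h)]
      rw [fdual_root, prr]
    rw [hq', htree]
    ring
  -- dual bound
  have hd : ∀ u v : GVert q k, fdual q k u - fdual q k v ≤ gdist G u v := by
    intro u v
    exact lip_dist' (lip_fdual q k) ((reach_t q k u).symm.trans (reach_t q k v))
  have hbound := emd_dual (gdist G) (Pdist G (vT q k)) (Pdist G (vTr q k (treeRoot k)))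
    (fdual q k) hd (pdist_nonneg G _) (pdist_nonneg G _)
    (pdist_mass G _) (pdist_mass G _)
  rw [hSt, hSr] at hbound
  have htarget : 5 / 4 + (3 / 2) * (((q : ℝ) + 1) / ((q : ℝ) + 3))
      = (3*(q:ℝ)+6) * ((q:ℝ)+3)⁻¹ - 3 * (12:ℝ)⁻¹ := by
    field_simp
    ring
  constructor
  · rw [htarget]; exact hbound
  · rw [ricci]
    linarith [hbound, htarget]
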